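/- Let f : [a,b] → ℝ be convex and g : [c,d] → ℝ be affine with slope g'. Let α = inf{ x ∈ [a,b] : the right slope of f at x is ≥ g' } (with α = b if no such point exists). Then the (min,plus)-convolution f * g : [a+c, b+d] → ℝ is given by (f*g)(x) = f(x-c) + g(c) for a+c ≤ x ≤ α+c, (f*g)(x) = f(α) + g(x-α) for α+c < x ≤ α+d, and (f*g)(x) = f(x-d) + g(d) for α+d < x ≤ b+d; in particular f * g is convex. -/

import Mathlib

/-- Convolution of a convex function by an affine function: with
`α = inf { x ∈ [a,b] : every forward slope of f at x is ≥ g' }` (so `α = b` when no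
interior point qualifies), the (min,plus)-convolution `f * g` on `[a+c, b+d]` equals
`f(x-c) + g(c)` on `[a+c, α+c]`, `f(α) + g(x-α)` on `(α+c, α+d]`, and `f(x-d) + g(d)`
on `(α+d, b+d]`; in particular `f * g` is convex. -/
theorem minplus_convolution_convex_affine (a b c d s : ℝ) (hab : a < b) (hcd : c < d)
    (F G : ℝ → ℝ) (hF : ConvexOn ℝ (Set.Icc a b) F)
    (hFc : ContinuousOn F (Set.Icc a b))
    (hG : ∀ x, G x = G c + s * (x - c)) :
    let f : ℝ → EReal := fun x => if x ∈ Set.Icc a b then (F x : EReal) else ⊤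
    let g : ℝ → EReal := fun x => if x ∈ Set.Icc c d then (G x : EReal) else ⊤
    let h : ℝ → EReal := fun x => ⨅ y : ℝ, f y + g (x - y)
    let α : ℝ := sInf {x | x ∈ Set.Icc a b ∧ ∀ y ∈ Set.Ioc x b, s * (y - x) ≤ F y - F x}
    let H : ℝ → ℝ := fun x =>
      if x ≤ α + c then F (x - c) + G c
      else if x ≤ α + d then F α + G (x - α)
      else F (x - d) + G d
    (∀ x ∈ Set.Icc (a + c) (b + d), h x = (H x : EReal)) ∧
      ConvexOn ℝ (Set.Icc (a + c) (b + d)) H := by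
  intro f g h α H
  set φ : ℝ → ℝ := fun x => F x - s * x with hφdef
  set S : Set ℝ :=
    {x | x ∈ Set.Icc a b ∧ ∀ y ∈ Set.Ioc x b, s * (y - x) ≤ F y - F x} with hSdef
  have hαdef : α = sInf S := rfl
  have hbS : b ∈ S := ⟨⟨hab.le, le_refl b⟩, fun y hy => absurd hy.1 (not_lt.mpr hy.2)⟩
  have hSbdd : BddBelow S := ⟨a, fun x hx => hx.1.1⟩
  have hαa : a ≤ α := by rw [hαdef]; exact le_csInf ⟨b, hbS⟩ (fun x hx => hx.1.1)
  have hαb : α ≤ b := by rw [hαdef]; exact csInf_le hSbdd hbS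
  have hSiff : ∀ x, x ∈ S ↔ (x ∈ Set.Icc a b ∧ ∀ y ∈ Set.Ioc x b, φ x ≤ φ y) := by
    intro x
    simp only [hSdef, Set.mem_setOf_eq, hφdef]
    constructor
    · rintro ⟨h1, h2⟩
      exact ⟨h1, fun y hy => by have := h2 y hy; linarith⟩
    · rintro ⟨h1, h2⟩
      exact ⟨h1, fun y hy => by have := h2 y hy; linarith⟩
  have hφc : ContinuousOn φ (Set.Icc a b) := by
    simp only [hφdef]
    exact hFc.sub ((continuous_const.mul continuous_id).continuousOn)
  -- three-point convexity inequality for φ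
  have hkey : ∀ u v w, a ≤ u → u < v → v < w → w ≤ b →
      (w - u) * φ v ≤ (w - v) * φ u + (v - u) * φ w := by
    intro u v w h1 h2 h3 h4
    have hwu : (0:ℝ) < w - u := by linarith
    have hφconv : ConvexOn ℝ (Set.Icc a b) φ := by
      refine ⟨convex_Icc a b, fun x hx y hy p q hp hq hpq => ?_⟩
      have hc := hF.2 hx hy hp hq hpq
      simp only [hφdef, smul_eq_mul] at *
      nlinarith [hc]
    have hc := hφconv.2 (⟨h1, by linarith⟩ : u ∈ Set.Icc a b)
      (⟨by linarith, h4⟩ : w ∈ Set.Icc a b)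
      (div_nonneg (by linarith) hwu.le : (0:ℝ) ≤ (w - v) / (w - u))
      (div_nonneg (by linarith) hwu.le : (0:ℝ) ≤ (v - u) / (w - u))
      (by field_simp; ring)
    rw [smul_eq_mul, smul_eq_mul, smul_eq_mul, smul_eq_mul] at hc
    have harg : (w - v) / (w - u) * u + (v - u) / (w - u) * w = v := by
      field_simp; ring
    rw [harg] at hc
    rw [div_mul_eq_mul_div, div_mul_eq_mul_div, ← add_div, le_div_iff₀ hwu] at hc
    linarith
  -- α belongs to S (continuity argument)
  have hαS : α ∈ S := by
    rw [hSiff]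
    refine ⟨⟨hαa, hαb⟩, fun y hy => ?_⟩
    by_contra hcon
    push_neg at hcon
    have hcont : ContinuousWithinAt φ (Set.Icc a b) α := hφc α ⟨hαa, hαb⟩
    rw [Metric.continuousWithinAt_iff] at hcont
    obtain ⟨δ, hδ, hball⟩ := hcont (φ α - φ y) (by linarith)
    have hpos : 0 < min δ (y - α) := lt_min hδ (by linarith [hy.1])
    obtain ⟨x, hxS, hxlt⟩ := Real.lt_sInf_add_pos (⟨b, hbS⟩ : S.Nonempty) hpos
    rw [← hαdef] at hxlt
    have hαx : α ≤ x := by rw [hαdef]; exact csInf_le hSbdd hxS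
    have hxy : x < y := by
      have := min_le_right δ (y - α); linarith
    have hd : dist x α < δ := by
      rw [Real.dist_eq, abs_of_nonneg (by linarith)]
      have := min_le_left δ (y - α); linarith
    have h1 := hball hxS.1 hd
    rw [Real.dist_eq] at h1
    have h2 : φ x ≤ φ y := ((hSiff x).mp hxS).2 y ⟨hxy, hy.2⟩
    have h3 := abs_lt.mp h1
    linarith [h3.1, h3.2]
  -- S is upward closed within [a,b]
  have hSup : ∀ x ∈ S, ∀ z, x ≤ z → z ≤ b → z ∈ S := by
    intro x hxS z hxz hzb
    rw [hSiff] at hxS ⊢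
    obtain ⟨hxab, hx2⟩ := hxS
    refine ⟨⟨le_trans hxab.1 hxz, hzb⟩, fun y hy => ?_⟩
    rcases eq_or_lt_of_le hxz with rfl | hlt
    · exact hx2 y hy
    · have h1 : φ x ≤ φ z := hx2 z ⟨hlt, hzb⟩
      have h3 := hkey x z y hxab.1 hlt hy.1 hy.2
      nlinarith [mul_nonneg (sub_pos.mpr hy.1).le (sub_nonneg.mpr h1), sub_pos.mpr hlt]
  -- φ is monotone on [α,b]
  have hmono : ∀ u v, α ≤ u → u ≤ v → v ≤ b → φ u ≤ φ v := by
    intro u v hu huv hvb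
    rcases eq_or_lt_of_le huv with rfl | hlt
    · exact le_refl _
    · have huS := hSup α hαS u hu (le_trans huv hvb)
      exact ((hSiff u).mp huS).2 v ⟨hlt, hvb⟩
  -- α is a global minimizer of φ on [a,b]
  have hmin : ∀ t ∈ Set.Icc a b, φ α ≤ φ t := by
    obtain ⟨m, hm, hminOn⟩ :=
      isCompact_Icc.exists_isMinOn (Set.nonempty_Icc.mpr hab.le) hφc
    have hmOn := isMinOn_iff.mp hminOn
    have hαm : α ≤ m := by
      rw [hαdef]
      exact csInf_le hSbdd ((hSiff m).mpr
        ⟨hm, fun y hy => hmOn y ⟨le_trans hm.1 hy.1.le, hy.2⟩⟩)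
    intro t ht
    exact le_trans (hmono α m le_rfl hαm hm.2) (hmOn t ht)
  -- φ is antitone on [a,α]
  have hanti : ∀ u v, a ≤ u → u ≤ v → v ≤ α → φ v ≤ φ u := by
    intro u v hau huv hvα
    rcases eq_or_lt_of_le huv with rfl | hlt
    · exact le_refl _
    rcases eq_or_lt_of_le hvα with rfl | hvlt
    · exact hmin u ⟨hau, by linarith⟩
    · have hvS : v ∉ S := by
        intro hvS
        have := csInf_le hSbdd hvS
        rw [← hαdef] at this
        linarith
      rw [hSiff] at hvS
      push_neg at hvS
      obtain ⟨y, hy, hylt⟩ := hvS ⟨by linarith, by linarith⟩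
      have h3 := hkey u v y hau hlt hy.1 hy.2
      nlinarith [mul_lt_mul_of_pos_left hylt (sub_pos.mpr hlt), sub_pos.mpr hy.1]
  -- lower bound for H
  have hHle : ∀ x, a + c ≤ x → x ≤ b + d → ∀ y, y ∈ Set.Icc a b → x - y ∈ Set.Icc c d →
      H x ≤ F y + G (x - y) := by
    intro x hx1 hx2 y hy hxy
    obtain ⟨hy1, hy2⟩ := hy
    obtain ⟨hxy1, hxy2⟩ := hxy
    simp only [H]
    split_ifs with h1 h2
    · have hp := hanti y (x - c) hy1 (by linarith) (by linarith)
      simp only [hφdef] at hp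
      rw [hG (x - y)]
      linarith
    · have hp := hmin y ⟨hy1, hy2⟩
      simp only [hφdef] at hp
      rw [hG (x - y), hG (x - α)]
      linarith
    · have hp := hmono (x - d) y (by linarith) (by linarith) hy2
      simp only [hφdef] at hp
      rw [hG (x - y), hG d]
      linarith
  -- the exact value of H
  have hHeq : ∀ x, a + c ≤ x → x ≤ b + d → ∃ t, t ∈ Set.Icc a b ∧ x - t ∈ Set.Icc c d ∧
      H x = F t + G (x - t) := by
    intro x hx1 hx2
    simp only [H]
    split_ifs with h1 h2
    · exact ⟨x - c, ⟨by linarith, by linarith⟩, ⟨by linarith, by linarith⟩,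
        by rw [show x - (x - c) = c by ring]⟩
    · exact ⟨α, ⟨hαa, hαb⟩, ⟨by linarith, by linarith⟩, rfl⟩
    · exact ⟨x - d, ⟨by linarith, by linarith⟩, ⟨by linarith, by linarith⟩,
        by rw [show x - (x - d) = d by ring]⟩
  constructor
  · intro x hx
    obtain ⟨t, ht1, ht2, ht3⟩ := hHeq x hx.1 hx.2
    apply le_antisymm
    · have hle : h x ≤ f t + g (x - t) := by
        simp only [h]
        exact iInf_le _ t
      simp only [f, g, if_pos ht1, if_pos ht2] at hle
      rw [← EReal.coe_add, ← ht3] at hle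
      exact hle
    · simp only [h]
      refine le_iInf fun y => ?_
      by_cases hy : y ∈ Set.Icc a b
      · by_cases hxy : x - y ∈ Set.Icc c d
        · simp only [f, g, if_pos hy, if_pos hxy, ← EReal.coe_add, EReal.coe_le_coe_iff]
          exact hHle x hx.1 hx.2 y hy hxy
        · simp only [f, g, if_pos hy, if_neg hxy]
          rw [EReal.coe_add_top]
          exact le_top
      · simp only [f, if_neg hy]
        have hne : g (x - y) ≠ ⊥ := by
          simp only [g]
          split_ifs
          · exact EReal.coe_ne_bot _
          · exact top_ne_bot
        rw [EReal.top_add_of_ne_bot hne]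
        exact le_top
  · refine ⟨convex_Icc _ _, fun x1 hx1 x2 hx2 p q hp hq hpq => ?_⟩
    simp only [smul_eq_mul]
    obtain ⟨t1, ht11, ht12, ht13⟩ := hHeq x1 hx1.1 hx1.2
    obtain ⟨t2, ht21, ht22, ht23⟩ := hHeq x2 hx2.1 hx2.2
    have hxmem : p * x1 + q * x2 ∈ Set.Icc (a + c) (b + d) := by
      have := convex_Icc (a + c) (b + d) hx1 hx2 hp hq hpq
      simpa using this
    have htmem : p * t1 + q * t2 ∈ Set.Icc a b := by
      have := convex_Icc a b ht11 ht21 hp hq hpq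
      simpa using this
    have hdmem : (p * x1 + q * x2) - (p * t1 + q * t2) ∈ Set.Icc c d := by
      have := convex_Icc c d ht12 ht22 hp hq hpq
      simp only [smul_eq_mul] at this
      have heq : (p * x1 + q * x2) - (p * t1 + q * t2) = p * (x1 - t1) + q * (x2 - t2) := by
        ring
      rw [heq]; exact this
    have h1 := hHle _ hxmem.1 hxmem.2 _ htmem hdmem
    have h2 := hF.2 ht11 ht21 hp hq hpq
    simp only [smul_eq_mul] at h2
    have h3 : G ((p * x1 + q * x2) - (p * t1 + q * t2))
        = p * G (x1 - t1) + q * G (x2 - t2) := by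
      rw [hG ((p * x1 + q * x2) - (p * t1 + q * t2)), hG (x1 - t1), hG (x2 - t2)]
      have hq1 : q = 1 - p := by linarith
      subst hq1; ring
    rw [ht13, ht23]
    nlinarith [h1, h2, h3, hp, hq]
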